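/- Let M be an n×n Boolean matrix and u, v Boolean n-vectors, and G_{uMv} the weighted graph as above. The shortest (s,t)-path in G_{uMv} has weight exactly 3 if uᵀMv = 1, and the shortest (s,t)-path has weight at least 5 if uᵀMv = 0. In particular, a (5/3 − δ)-approximation of the shortest (s,t)-path distance, for any δ > 0, determines the value of uᵀMv. -/

import Mathlib

/-- Vertices of the graph `G_{uMv}`: a source `s`, a sink `t`,
and two sides `a_1,…,a_n` and `b_1,…,b_n`. -/
inductive Vtx (n : ℕ) where
  | s : Vtx n
  | t : Vtx n
  | a : Fin n → Vtx n
  | b : Fin n → Vtx n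
deriving DecidableEq

/-- Adjacency of `G_{uMv}`: edges between `s` and every `a i`,
between every `a i` and every `b j`, and between every `b j` and `t`. -/
inductive GAdj (n : ℕ) : Vtx n → Vtx n → Prop where
  | sa (i : Fin n) : GAdj n Vtx.s (Vtx.a i)
  | as (i : Fin n) : GAdj n (Vtx.a i) Vtx.s
  | ab (i j : Fin n) : GAdj n (Vtx.a i) (Vtx.b j)
  | ba (i j : Fin n) : GAdj n (Vtx.b j) (Vtx.a i)
  | bt (j : Fin n) : GAdj n (Vtx.b j) Vtx.t
  | tb (j : Fin n) : GAdj n Vtx.t (Vtx.b j)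

/-- Edge weights of `G_{uMv}`: `w(s,aᵢ) = 3 − 2·u[i]`, `w(aᵢ,bⱼ) = 3 − 2·M[i,j]`,
`w(bⱼ,t) = 3 − 2·v[j]`. -/
def gW {n : ℕ} (M : Fin n → Fin n → Bool) (u v : Fin n → Bool) :
    Vtx n → Vtx n → ℕ
  | Vtx.s, Vtx.a i => 3 - 2 * (if u i then 1 else 0)
  | Vtx.a i, Vtx.s => 3 - 2 * (if u i then 1 else 0)
  | Vtx.a i, Vtx.b j => 3 - 2 * (if M i j then 1 else 0)
  | Vtx.b j, Vtx.a i => 3 - 2 * (if M i j then 1 else 0)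
  | Vtx.b j, Vtx.t => 3 - 2 * (if v j then 1 else 0)
  | Vtx.t, Vtx.b j => 3 - 2 * (if v j then 1 else 0)
  | _, _ => 0

/-- The weight of a walk, given as the list of visited vertices:
the sum of the weights of its consecutive edges. -/
def walkWeight {n : ℕ} (w : Vtx n → Vtx n → ℕ) (p : List (Vtx n)) : ℕ :=
  ((p.zip p.tail).map fun q => w q.1 q.2).sum

/-- The set of weights of `(s,t)`-paths in `G_{uMv}`. -/
def stPathWeights (n : ℕ) (M : Fin n → Fin n → Bool) (u v : Fin n → Bool) : Set ℕ :=
  {c | ∃ p : List (Vtx n), p.head? = some Vtx.s ∧ p.getLast? = some Vtx.t ∧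
    List.Chain' (GAdj n) p ∧ p.Nodup ∧ c = walkWeight (gW M u v) p}

/-- A potential function bounding the distance to `t` from below. -/
def phi {n : ℕ} (M : Fin n → Fin n → Bool) (u v : Fin n → Bool) : Vtx n → ℕ
  | Vtx.t => 0
  | Vtx.b j => if v j then 1 else 3
  | Vtx.a i => if ∃ j, M i j = true ∧ v j = true then 2 else 4
  | Vtx.s => if ∃ i j, u i = true ∧ M i j = true ∧ v j = true then 3 else 5

lemma phi_edge {n : ℕ} (M : Fin n → Fin n → Bool) (u v : Fin n → Bool)
    {x y : Vtx n} (h : GAdj n x y) :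
    phi M u v x ≤ gW M u v x y + phi M u v y := by
  cases h with
  | sa i =>
      simp only [phi, gW]
      by_cases hu : u i = true
      · by_cases hA : ∃ j, M i j = true ∧ v j = true
        · obtain ⟨j, hM, hv⟩ := hA
          rw [if_pos (⟨i, j, hu, hM, hv⟩ :
            ∃ i j, u i = true ∧ M i j = true ∧ v j = true),
            if_pos hu, if_pos (⟨j, hM, hv⟩ : ∃ j, M i j = true ∧ v j = true)]
        · rw [if_neg hA]
          split_ifs <;> omega
      · rw [if_neg hu]
        split_ifs <;> omega
  | as i =>
      simp only [phi, gW]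
      split_ifs <;> omega
  | ab i j =>
      simp only [phi, gW]
      by_cases hM : M i j = true
      · by_cases hv : v j = true
        · rw [if_pos (⟨j, hM, hv⟩ : ∃ j, M i j = true ∧ v j = true),
            if_pos hM, if_pos hv]
        · rw [if_pos hM, if_neg hv]
          split_ifs <;> omega
      · rw [if_neg hM]
        split_ifs <;> omega
  | ba i j =>
      simp only [phi, gW]
      split_ifs <;> omega
  | bt j =>
      simp only [phi, gW]
      split_ifs <;> omega
  | tb j =>
      simp only [phi, gW]
      split_ifs <;> omega

lemma phi_chain {n : ℕ} (M : Fin n → Fin n → Bool) (u v : Fin n → Bool) :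
    ∀ p : List (Vtx n), List.Chain' (GAdj n) p → ∀ x y,
      p.head? = some x → p.getLast? = some y →
      phi M u v x ≤ walkWeight (gW M u v) p + phi M u v y := by
  intro p
  induction p with
  | nil => intro _ x y hx; simp at hx
  | cons z rest ih =>
      intro hc x y hx hy
      cases rest with
      | nil =>
          simp at hx hy
          subst hx; subst hy
          simp [walkWeight]
      | cons z' rest' =>
          simp only [List.head?_cons, Option.some.injEq] at hx
          subst hx
          rw [List.Chain', List.isChain_cons_cons] at hc
          have hlast : (z' :: rest').getLast? = some y := by
            rw [← hy]; rfl
          have hIH := ih hc.2 z' y (by simp) hlast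
          have hedge := phi_edge M u v hc.1
          have hw : walkWeight (gW M u v) (z :: z' :: rest') =
              gW M u v z z' + walkWeight (gW M u v) (z' :: rest') := by
            simp [walkWeight]
          omega

lemma path_lb {n : ℕ} (M : Fin n → Fin n → Bool) (u v : Fin n → Bool)
    {c : ℕ} (hc : c ∈ stPathWeights n M u v) :
    phi M u v Vtx.s ≤ c := by
  obtain ⟨p, hh, hl, hch, _, rfl⟩ := hc
  have := phi_chain M u v p hch Vtx.s Vtx.t hh hl
  simpa [phi] using this

lemma mem_path {n : ℕ} (M : Fin n → Fin n → Bool) (u v : Fin n → Bool)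
    (i j : Fin n) :
    gW M u v Vtx.s (Vtx.a i) + (gW M u v (Vtx.a i) (Vtx.b j) +
      gW M u v (Vtx.b j) Vtx.t) ∈ stPathWeights n M u v := by
  refine ⟨[Vtx.s, Vtx.a i, Vtx.b j, Vtx.t], rfl, rfl, ?_, ?_, ?_⟩
  · exact List.isChain_cons_cons.mpr ⟨GAdj.sa i, List.isChain_cons_cons.mpr ⟨GAdj.ab i j,
      List.isChain_cons_cons.mpr ⟨GAdj.bt j, List.isChain_singleton _⟩⟩⟩
  · simp
  · simp [walkWeight]

/-- The shortest `(s,t)`-path in `G_{uMv}` has weight exactly `3` if `uᵀMv = 1`,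
and every `(s,t)`-path has weight at least `5` if `uᵀMv = 0`.  Hence any
`(5/3 − δ)`-approximation `ℓ̂` of the shortest `(s,t)`-path distance, for any
`δ > 0`, determines the value of `uᵀMv`: it is `1` iff `ℓ̂ < 5`. -/
theorem stmt2 (n : ℕ) (hn : 1 ≤ n) (M : Fin n → Fin n → Bool) (u v : Fin n → Bool) :
    ((∃ i j, u i = true ∧ M i j = true ∧ v j = true) →
        IsLeast (stPathWeights n M u v) 3) ∧
    ((¬ ∃ i j, u i = true ∧ M i j = true ∧ v j = true) →
        ∀ c ∈ stPathWeights n M u v, 5 ≤ c) ∧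
    (∀ δ : ℝ, 0 < δ → ∀ ℓ : ℝ,
      ((sInf (stPathWeights n M u v) : ℕ) : ℝ) ≤ ℓ →
      ℓ ≤ (5/3 - δ) * ((sInf (stPathWeights n M u v) : ℕ) : ℝ) →
      (ℓ < 5 ↔ ∃ i j, u i = true ∧ M i j = true ∧ v j = true)) := by
  have part1 : (∃ i j, u i = true ∧ M i j = true ∧ v j = true) →
      IsLeast (stPathWeights n M u v) 3 := by
    rintro ⟨i, j, hu, hM, hv⟩
    constructor
    · have := mem_path M u v i j
      simpa [gW, hu, hM, hv] using this
    · intro c hc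
      have h := path_lb M u v hc
      have hphi : phi M u v Vtx.s = 3 := by
        simp only [phi]
        rw [if_pos (⟨i, j, hu, hM, hv⟩ :
          ∃ i j, u i = true ∧ M i j = true ∧ v j = true)]
      omega
  have part2 : (¬ ∃ i j, u i = true ∧ M i j = true ∧ v j = true) →
      ∀ c ∈ stPathWeights n M u v, 5 ≤ c := by
    intro h c hc
    have h' := path_lb M u v hc
    have hphi : phi M u v Vtx.s = 5 := by
      simp only [phi]; rw [if_neg h]
    omega
  refine ⟨part1, part2, ?_⟩
  intro δ hδ ℓ h1 h2
  by_cases hw : ∃ i j, u i = true ∧ M i j = true ∧ v j = true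
  · have h3 : sInf (stPathWeights n M u v) = 3 := (part1 hw).csInf_eq
    rw [h3] at h2
    push_cast at h2
    exact ⟨fun _ => hw, fun _ => by nlinarith⟩
  · have hmem : sInf (stPathWeights n M u v) ∈ stPathWeights n M u v :=
      Nat.sInf_mem ⟨_, mem_path M u v ⟨0, hn⟩ ⟨0, hn⟩⟩
    have h5 : 5 ≤ sInf (stPathWeights n M u v) := part2 hw _ hmem
    have h5' : (5 : ℝ) ≤ ((sInf (stPathWeights n M u v) : ℕ) : ℝ) := by
      exact_mod_cast h5
    exact ⟨fun hl => absurd (lt_of_lt_of_le hl (le_trans h5' h1)) (lt_irrefl _),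
      fun h => absurd h hw⟩
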